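/- The reduction axiom for announcements and conditional knowing value is valid: ⟨φ⟩Kv(ψ,c) ↔ (φ ∧ Kv(⟨φ⟩ψ, c)) holds at every world of every first-order epistemic model. -/
import Mathlib


/-- Formulas of epistemic logic with conditional knowing value and announcements:
atoms, ¬, ∧, K, Kv(φ,c), and announcement diamond ⟨φ⟩ψ. Constants come from C. -/
inductive KvForm (C : Type*) where
  | atom : ℕ → KvForm C
  | neg : KvForm C → KvForm C
  | conj : KvForm C → KvForm C → KvForm C
  | know : KvForm C → KvForm C
  | kv : KvForm C → C → KvForm C
  | ann : KvForm C → KvForm C → KvForm C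

/-- Satisfaction on a FO epistemic model (S, D, rel, V, VC); announcing φ
restricts the epistemic relation to φ-worlds (domain and VC unchanged). -/
def kvSat {S C D : Type*} (V : ℕ → S → Prop) (VC : C → S → D) :
    (S → S → Prop) → KvForm C → S → Prop
  | _, .atom n, s => V n s
  | R, .neg φ, s => ¬ kvSat V VC R φ s
  | R, .conj φ ψ, s => kvSat V VC R φ s ∧ kvSat V VC R ψ s
  | R, .know φ, s => ∀ t, R s t → kvSat V VC R φ t
  | R, .kv φ c, s => ∀ t1 t2, R s t1 → R s t2 →
      kvSat V VC R φ t1 → kvSat V VC R φ t2 → VC c t1 = VC c t2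
  | R, .ann φ χ, s =>
      kvSat V VC R φ s ∧
      kvSat V VC (fun a b => R a b ∧ kvSat V VC R φ a ∧ kvSat V VC R φ b) χ s

/-- Reduction axiom: ⟨φ⟩Kv(ψ,c) ↔ (φ ∧ Kv(⟨φ⟩ψ, c)) is valid. -/
theorem ann_kv_reduction {S C D : Type*} (V : ℕ → S → Prop) (VC : C → S → D)
    (R : S → S → Prop) (φ ψ : KvForm C) (c : C) (s : S) :
    kvSat V VC R (.ann φ (.kv ψ c)) s ↔
      (kvSat V VC R φ s ∧ kvSat V VC R (.kv (.ann φ ψ) c) s) := by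
  simp only [kvSat]
  constructor
  · rintro ⟨hφ, h⟩
    refine ⟨hφ, fun t1 t2 h1 h2 hp1 hp2 => ?_⟩
    exact h t1 t2 ⟨h1, hφ, hp1.1⟩ ⟨h2, hφ, hp2.1⟩ hp1.2 hp2.2
  · rintro ⟨hφ, h⟩
    refine ⟨hφ, fun t1 t2 h1 h2 hp1 hp2 => ?_⟩
    exact h t1 t2 h1.1 h2.1 ⟨h1.2.2, hp1⟩ ⟨h2.2.2, hp2⟩
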